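/- Let A be a finite set and ρ = ⊗_{n∈ℤ} ρ_n a product probability measure on A^ℤ satisfying the Doeblin condition. For n ∈ ℤ⁺ define g_n: A^ℤ → ℝ by g_n(x) = (1/n) log₂ ρ([x]_n) + (1/n) ∑_{k=1}^n H(ρ_k), where [x]_n = {y ∈ A^ℤ : y_k = x_k for 1 ≤ k ≤ n} and H(ρ_k) = −∑_{a∈A} ρ_k(a) log₂ ρ_k(a). Then g_n converges to 0 in measure with respect to ρ: for every ε > 0, ρ(|g_n| > ε) → 0 as n → ∞. -/

import Mathlib

open MeasureTheory Filter Set Topology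

/-- The cylinder set of points agreeing with `y` on the finite coordinate set `s`. -/
def cylinder {A : Type*} (s : Finset ℤ) (y : ℤ → A) : Set (ℤ → A) :=
  {x | ∀ i ∈ s, x i = y i}

/-- `μ` is the product measure on `A^ℤ` with marginals `ρ i`. -/
def IsProductMeasure {A : Type*} [MeasurableSpace A]
    (μ : Measure (ℤ → A)) (ρ : ℤ → A → ℝ) : Prop :=
  ∀ (s : Finset ℤ) (y : ℤ → A), μ (cylinder s y) = ∏ i ∈ s, ENNReal.ofReal (ρ i (y i))

/-- `p` is a probability vector. -/
def IsProbVec {A : Type*} [Fintype A] (p : A → ℝ) : Prop :=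
  (∀ a, 0 ≤ p a) ∧ ∑ a, p a = 1

/-- Shannon entropy (in bits) of a probability vector. -/
noncomputable def entropy {A : Type*} [Fintype A] (p : A → ℝ) : ℝ :=
  -∑ a, p a * Real.logb 2 (p a)

/-- `g_n(x) = (1/n) log₂ μ([x]_n) + (1/n) ∑_{k=1}^n H(ρ_k)`, where `[x]_n` is the cylinder
on coordinates `1, …, n`. -/
noncomputable def shannonErr {A : Type*} [Fintype A] [MeasurableSpace A]
    (μ : Measure (ℤ → A)) (ρ : ℤ → A → ℝ) (n : ℕ) (x : ℤ → A) : ℝ :=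
  Real.logb 2 ((μ {y | ∀ k ∈ Finset.Icc (1 : ℤ) (n : ℤ), y k = x k}).toReal) / n +
    (∑ k ∈ Finset.Icc (1 : ℤ) (n : ℤ), entropy (ρ k)) / n

section Aux

variable {A : Type*} [Fintype A]

lemma sum_pi_prod (s : Finset ℤ) (F : (i : s) → A → ℝ) :
    ∑ w : (s → A), ∏ i : s, F i (w i) = ∏ i : s, ∑ a, F i a :=
  (Fintype.prod_sum fun (i : s) (a : A) => F i a).symm

lemma expect_single (s : Finset ℤ) (ρ : ℤ → A → ℝ) (hρ : ∀ i, ∑ a, ρ i a = 1)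
    (j : s) (f : A → ℝ) :
    ∑ w : (s → A), (∏ i : s, ρ i (w i)) * f (w j) = ∑ a, ρ j a * f a := by
  classical
  have h1 : ∀ w : (s → A), (∏ i : s, ρ i (w i)) * f (w j)
      = ∏ i : s, (ρ (i:ℤ) (w i) * if i = j then f (w i) else 1) := by
    intro w
    rw [Finset.prod_mul_distrib, Finset.prod_ite_eq' Finset.univ j (fun i : s => f (w i))]
    simp
  simp_rw [h1]
  rw [sum_pi_prod s (fun i a => ρ i a * if i = j then f a else 1)]
  rw [Finset.prod_eq_single j]
  · simp
  · intro i _ hij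
    simp [hij, hρ]
  · simp

/-- Cross term vanishes when the first factor has zero mean. -/
lemma expect_cross (s : Finset ℤ) (ρ : ℤ → A → ℝ)
    (j k : s) (hjk : j ≠ k) (f g : A → ℝ) (hf : ∑ a, ρ j a * f a = 0) :
    ∑ w : (s → A), (∏ i : s, ρ i (w i)) * (f (w j) * g (w k)) = 0 := by
  classical
  have h1 : ∀ w : (s → A), (∏ i : s, ρ i (w i)) * (f (w j) * g (w k))
      = ∏ i : s, (ρ (i:ℤ) (w i) * (if i = j then f (w i) else 1)
          * (if i = k then g (w i) else 1)) := by
    intro w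
    rw [Finset.prod_mul_distrib, Finset.prod_mul_distrib,
      Finset.prod_ite_eq' Finset.univ j (fun i : s => f (w i)),
      Finset.prod_ite_eq' Finset.univ k (fun i : s => g (w i))]
    simp [mul_assoc]
  simp_rw [h1]
  rw [sum_pi_prod s (fun i a => ρ i a * (if i = j then f a else 1) * (if i = k then g a else 1))]
  apply Finset.prod_eq_zero (Finset.mem_univ j)
  simp [hjk, hf]

/-- Second-moment (variance) bound for a sum of independent mean-zero bounded variables. -/
lemma expect_sq_le (s : Finset ℤ) (ρ : ℤ → A → ℝ) (hρ1 : ∀ i, ∑ a, ρ i a = 1)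
    (hρ0 : ∀ i a, 0 ≤ ρ i a) (Y : ℤ → A → ℝ) (C : ℝ)
    (hmean : ∀ i : ℤ, ∑ a, ρ i a * Y i a = 0)
    (hbd : ∀ (i : ℤ) (a : A), Y i a * Y i a ≤ C ^ 2) :
    ∑ w : (s → A), (∏ i : s, ρ i (w i)) * (∑ i : s, Y i (w i)) ^ 2
      ≤ s.card * C ^ 2 := by
  classical
  have hexp : ∀ w : (s → A), (∏ i : s, ρ i (w i)) * (∑ i : s, Y i (w i)) ^ 2
      = ∑ j : s, ∑ k : s, (∏ i : s, ρ i (w i)) * (Y j (w j) * Y k (w k)) := by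
    intro w
    rw [sq, Finset.sum_mul_sum]
    simp_rw [Finset.mul_sum]
  simp_rw [hexp]
  rw [Finset.sum_comm]
  have key : ∀ j : s, (∑ w : (s → A), ∑ k : s,
      (∏ i : s, ρ i (w i)) * (Y j (w j) * Y k (w k))) ≤ C ^ 2 := by
    intro j
    rw [Finset.sum_comm]
    have hterm : ∀ k : s, (∑ w : (s → A),
        (∏ i : s, ρ i (w i)) * (Y j (w j) * Y k (w k)))
        ≤ if k = j then C ^ 2 else 0 := by
      intro k
      by_cases hk : k = j
      · subst hk
        rw [if_pos rfl, expect_single s ρ hρ1 k (fun a => Y k a * Y k a)]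
        calc ∑ a, ρ k a * (Y k a * Y k a) ≤ ∑ a, ρ k a * C ^ 2 :=
              Finset.sum_le_sum fun a _ => mul_le_mul_of_nonneg_left (hbd k a) (hρ0 k a)
          _ = C ^ 2 := by rw [← Finset.sum_mul, hρ1]; ring
      · rw [if_neg hk, expect_cross s ρ j k (Ne.symm hk) (Y j) (Y k) (hmean j)]
    calc (∑ k : s, ∑ w : (s → A), (∏ i : s, ρ i (w i)) * (Y j (w j) * Y k (w k)))
        ≤ ∑ k : s, if k = j then C ^ 2 else 0 := Finset.sum_le_sum fun k _ => hterm k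
      _ = C ^ 2 := by simp
  calc (∑ j : s, ∑ w : (s → A), ∑ k : s, (∏ i : s, ρ i (w i)) * (Y j (w j) * Y k (w k)))
      ≤ ∑ _j : s, C ^ 2 := Finset.sum_le_sum fun j _ => key j
    _ = s.card * C ^ 2 := by simp [Finset.card_univ]

end Aux

/-- Shannon's theorem for Doeblin product measures: `g_n → 0` in `ρ`-measure. -/
theorem shannon_in_measure {A : Type*} [Fintype A]
    [MeasurableSpace A] [MeasurableSingletonClass A]
    (ρ : ℤ → A → ℝ) (hρ : ∀ i, IsProbVec (ρ i))
    (hdoeblin : ∃ δ > 0, ∀ (i : ℤ) (b : A), δ < ρ i b)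
    (μ : Measure (ℤ → A)) (hprod : IsProductMeasure μ ρ)
    (ε : ℝ) (hε : 0 < ε) :
    Tendsto (fun n : ℕ => μ {x | ε < |shannonErr μ ρ n x|}) atTop (𝓝 0) := by
  classical
  obtain ⟨δ, hδ, hlt⟩ := hdoeblin
  -- basic facts about ρ
  have hρ0 : ∀ (i : ℤ) (a : A), 0 ≤ ρ i a := fun i a => (hρ i).1 a
  have hρ1 : ∀ i : ℤ, ∑ a, ρ i a = 1 := fun i => (hρ i).2
  have hpos : ∀ (i : ℤ) (a : A), 0 < ρ i a := fun i a => hδ.trans (hlt i a)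
  have hle1 : ∀ (i : ℤ) (a : A), ρ i a ≤ 1 := by
    intro i a
    calc ρ i a ≤ ∑ b, ρ i b :=
          Finset.single_le_sum (fun b _ => hρ0 i b) (Finset.mem_univ a)
      _ = 1 := hρ1 i
  have hA : Nonempty A := by
    rcases isEmpty_or_nonempty A with h | h
    · exfalso; have := hρ1 0; simp at this
    · exact h
  have hδ1 : δ < 1 := lt_of_lt_of_le (hlt 0 (Classical.arbitrary A)) (hle1 0 _)
  -- the centered variables
  set Y : ℤ → A → ℝ := fun i a => Real.logb 2 (ρ i a) + entropy (ρ i) with hY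
  set L : ℝ := -Real.logb 2 δ with hL
  have hL0 : 0 ≤ L := by
    have : Real.logb 2 δ ≤ 0 := Real.logb_nonpos one_lt_two hδ.le hδ1.le
    linarith
  have hlogb_bd : ∀ (i : ℤ) (a : A), |Real.logb 2 (ρ i a)| ≤ L := by
    intro i a
    have h1 : Real.logb 2 δ ≤ Real.logb 2 (ρ i a) :=
      Real.logb_le_logb_of_le one_lt_two hδ (hlt i a).le
    have h2 : Real.logb 2 (ρ i a) ≤ 0 :=
      Real.logb_nonpos one_lt_two (hpos i a).le (hle1 i a)
    rw [abs_of_nonpos h2]; linarith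
  have hH_bd : ∀ i : ℤ, |entropy (ρ i)| ≤ L := by
    intro i
    rw [entropy, abs_neg]
    calc |∑ a, ρ i a * Real.logb 2 (ρ i a)| ≤ ∑ a, |ρ i a * Real.logb 2 (ρ i a)| :=
          Finset.abs_sum_le_sum_abs _ _
      _ ≤ ∑ a, ρ i a * L := by
          refine Finset.sum_le_sum fun a _ => ?_
          rw [abs_mul, abs_of_nonneg (hρ0 i a)]
          exact mul_le_mul_of_nonneg_left (hlogb_bd i a) (hρ0 i a)
      _ = L := by rw [← Finset.sum_mul, hρ1, one_mul]
  set C : ℝ := 2 * L with hC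
  have hYbd : ∀ (i : ℤ) (a : A), Y i a * Y i a ≤ C ^ 2 := by
    intro i a
    have habs : |Y i a| ≤ C := by
      calc |Y i a| ≤ |Real.logb 2 (ρ i a)| + |entropy (ρ i)| := abs_add_le _ _
        _ ≤ C := by rw [hC]; linarith [hlogb_bd i a, hH_bd i]
    calc Y i a * Y i a = |Y i a| * |Y i a| := (abs_mul_abs_self _).symm
      _ ≤ C * C := mul_le_mul habs habs (abs_nonneg _) (le_trans (abs_nonneg _) habs)
      _ = C ^ 2 := (sq C).symm
  have hmean : ∀ i : ℤ, ∑ a, ρ i a * Y i a = 0 := by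
    intro i
    simp_rw [hY, mul_add, Finset.sum_add_distrib, ← Finset.sum_mul, hρ1, one_mul, entropy]
    ring
  -- pointwise identity for shannonErr
  have herr : ∀ (n : ℕ) (x : ℤ → A),
      shannonErr μ ρ n x
        = (∑ i : (Finset.Icc (1:ℤ) (n:ℤ) : Finset ℤ), Y i (x i)) / n := by
    intro n x
    set s : Finset ℤ := Finset.Icc (1:ℤ) (n:ℤ) with hs
    have hcyl : {y : ℤ → A | ∀ k ∈ s, y k = x k} = cylinder s x := rfl
    have hμc : μ (cylinder s x) = ENNReal.ofReal (∏ i ∈ s, ρ i (x i)) := by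
      rw [hprod s x, ENNReal.ofReal_prod_of_nonneg fun i _ => hρ0 i (x i)]
    have htoReal : (μ {y : ℤ → A | ∀ k ∈ s, y k = x k}).toReal = ∏ i ∈ s, ρ i (x i) := by
      rw [hcyl, hμc, ENNReal.toReal_ofReal (Finset.prod_nonneg fun i _ => (hρ0 i (x i)))]
    rw [shannonErr, htoReal,
      Real.logb_prod s (fun i => ρ i (x i)) (fun i _ => (hpos i (x i)).ne'),
      ← add_div, ← Finset.sum_add_distrib]
    rw [Finset.sum_coe_sort s (fun i => Real.logb 2 (ρ i (x i)) + entropy (ρ i))]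
  -- the main bound
  have hbound : ∀ n : ℕ, 1 ≤ n →
      μ {x | ε < |shannonErr μ ρ n x|} ≤ ENNReal.ofReal (C ^ 2 / ε ^ 2 * (1 / n)) := by
    intro n hn
    set s : Finset ℤ := Finset.Icc (1:ℤ) (n:ℤ) with hs
    have hcard : s.card = n := by simp [hs]
    have hn0 : (0:ℝ) < n := by exact_mod_cast hn
    set P : (s → A) → ℝ := fun w => ∏ i : s, ρ i (w i) with hP
    set S : (s → A) → ℝ := fun w => ∑ i : s, Y i (w i) with hSdef
    have hP0 : ∀ w, 0 ≤ P w := fun w => Finset.prod_nonneg fun i _ => hρ0 i (w i)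
    set res : (ℤ → A) → (s → A) := fun x i => x i with hres
    set ext : (s → A) → (ℤ → A) :=
      fun w i => if h : i ∈ s then w ⟨i, h⟩ else Classical.arbitrary A with hext
    set Cw : (s → A) → Set (ℤ → A) := fun w => cylinder s (ext w) with hCw
    have hmem : ∀ (x : ℤ → A) (w : s → A), x ∈ Cw w ↔ res x = w := by
      intro x w
      constructor
      · intro hx
        funext i
        have h := hx i i.2
        rw [hext] at h
        simp only [dif_pos i.2] at h
        simpa using h
      · intro hx
        intro i hi
        rw [hext]; simp only [dif_pos hi]
        rw [← hx]
    have herrS : ∀ x : ℤ → A, shannonErr μ ρ n x = S (res x) / n := by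
      intro x
      rw [herr n x]
    set Bad : Finset (s → A) := Finset.univ.filter (fun w => ε < |S w / n|) with hBad
    have hset : {x | ε < |shannonErr μ ρ n x|} = ⋃ w ∈ Bad, Cw w := by
      ext x
      simp only [mem_setOf_eq, mem_iUnion, exists_prop]
      constructor
      · intro hx
        refine ⟨res x, ?_, (hmem x (res x)).mpr rfl⟩
        rw [hBad, Finset.mem_filter]
        exact ⟨Finset.mem_univ _, by rwa [herrS x] at hx⟩
      · rintro ⟨w, hw, hxw⟩
        have : res x = w := (hmem x w).mp hxw
        rw [herrS x, this]
        rw [hBad, Finset.mem_filter] at hw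
        exact hw.2
    have hmeas : ∀ w : s → A, MeasurableSet (Cw w) := by
      intro w
      have : Cw w = ⋂ i ∈ (s : Set ℤ), (fun x : ℤ → A => x i) ⁻¹' {ext w i} := by
        ext x; simp [hCw, _root_.cylinder]
      rw [this]
      exact MeasurableSet.biInter s.countable_toSet fun i _ =>
        (measurable_pi_apply i) (measurableSet_singleton _)
    have hdisj : (Bad : Set (s → A)).PairwiseDisjoint Cw := by
      intro w _ w' _ hww'
      refine Set.disjoint_left.mpr fun x hx hx' => hww' ?_
      rw [← (hmem x w).mp hx, (hmem x w').mp hx']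
    have hμC : ∀ w : s → A, μ (Cw w) = ENNReal.ofReal (P w) := by
      intro w
      calc μ (Cw w) = ∏ i ∈ s, ENNReal.ofReal (ρ i (ext w i)) := hprod s (ext w)
        _ = ∏ i : s, ENNReal.ofReal (ρ (i : ℤ) (ext w i)) :=
            (Finset.prod_coe_sort s (fun i => ENNReal.ofReal (ρ i (ext w i)))).symm
        _ = ∏ i : s, ENNReal.ofReal (ρ (i : ℤ) (w i)) := by
            refine Finset.prod_congr rfl fun i _ => ?_
            rw [hext]; simp only [dif_pos i.2]
        _ = ENNReal.ofReal (P w) :=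
            (ENNReal.ofReal_prod_of_nonneg fun (i : s) _ => hρ0 i (w i)).symm
    have hμval : μ {x | ε < |shannonErr μ ρ n x|}
        = ENNReal.ofReal (∑ w ∈ Bad, P w) := by
      rw [hset, measure_biUnion_finset hdisj fun w _ => hmeas w]
      rw [ENNReal.ofReal_sum_of_nonneg fun w _ => hP0 w]
      exact Finset.sum_congr rfl fun w _ => hμC w
    -- Chebyshev
    have hcheb : ∑ w ∈ Bad, P w ≤ C ^ 2 / ε ^ 2 * (1 / n) := by
      have hstep1 : ∀ w ∈ Bad, P w ≤ P w * (S w / (ε * n)) ^ 2 := by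
        intro w hw
        rw [hBad, Finset.mem_filter] at hw
        have h1 : ε * n < |S w| := by
          have := hw.2
          rw [abs_div, abs_of_pos hn0] at this
          calc ε * n < |S w| / n * n := by
                exact mul_lt_mul_of_pos_right this hn0
            _ = |S w| := by field_simp
        have h2 : (1:ℝ) ≤ (S w / (ε * n)) ^ 2 := by
          rw [div_pow, le_div_iff₀ (by positivity), one_mul, ← sq_abs (S w)]
          exact pow_le_pow_left₀ (by positivity) h1.le 2
        exact le_mul_of_one_le_right (hP0 w) h2
      have hstep2 : ∑ w ∈ Bad, P w * (S w / (ε * n)) ^ 2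
          ≤ ∑ w : (s → A), P w * (S w / (ε * n)) ^ 2 := by
        apply Finset.sum_le_sum_of_subset_of_nonneg (Finset.subset_univ _)
        intro w _ _
        exact mul_nonneg (hP0 w) (sq_nonneg _)
      have hstep3 : ∑ w : (s → A), P w * (S w / (ε * n)) ^ 2
          = (∑ w : (s → A), P w * S w ^ 2) / (ε * n) ^ 2 := by
        rw [Finset.sum_div]
        exact Finset.sum_congr rfl fun w _ => by rw [div_pow]; ring
      have hstep4 : ∑ w : (s → A), P w * S w ^ 2 ≤ n * C ^ 2 := by
        have := expect_sq_le s ρ hρ1 hρ0 Y C hmean hYbd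
        rwa [hcard] at this
      calc ∑ w ∈ Bad, P w ≤ ∑ w ∈ Bad, P w * (S w / (ε * n)) ^ 2 :=
            Finset.sum_le_sum hstep1
        _ ≤ ∑ w : (s → A), P w * (S w / (ε * n)) ^ 2 := hstep2
        _ = (∑ w : (s → A), P w * S w ^ 2) / (ε * n) ^ 2 := hstep3
        _ ≤ (n * C ^ 2) / (ε * n) ^ 2 := by
            apply div_le_div_of_nonneg_right hstep4 (by positivity)
        _ = C ^ 2 / ε ^ 2 * (1 / n) := by field_simp
    rw [hμval]
    exact ENNReal.ofReal_le_ofReal hcheb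
  -- conclude
  have hlim : Tendsto (fun n : ℕ => ENNReal.ofReal (C ^ 2 / ε ^ 2 * (1 / n)))
      atTop (𝓝 0) := by
    have h1 : Tendsto (fun n : ℕ => C ^ 2 / ε ^ 2 * (1 / n)) atTop (𝓝 0) := by
      have := tendsto_one_div_atTop_nhds_zero_nat.const_mul (C ^ 2 / ε ^ 2)
      simpa using this
    have := ENNReal.tendsto_ofReal h1
    simpa using this
  refine tendsto_of_tendsto_of_tendsto_of_le_of_le' tendsto_const_nhds hlim
    (Eventually.of_forall fun n => zero_le) ?_
  filter_upwards [eventually_ge_atTop 1] with n hn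
  exact hbound n hn
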